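/- Let Θ ⊂ ℝ^d, let R: ℝ^d → ℝ be twice continuously differentiable, let θ̃ be an interior point of Θ with ∇R(θ̃) = 0, and let H_θ denote the Hessian of R at θ. Suppose there are constants r > 0 and c > 0 such that the ball B_r(θ̃) ⊂ Θ and for all θ ∈ B_r(θ̃): H_θ^T H_{θ̃}^{-1} ≽ c I_d (i.e., the symmetric part of H_θ H_{θ̃}^{-1} dominates c I_d) and H_θ^T H_θ ≽ c I_d. Then there exists c₀ > 0 (depending only on c and sup_{θ ∈ B_r(θ̃)} ‖H_{θ̃}^{-1}‖_op) such that ‖∇R(θ)‖₂ ≥ c₀ ‖θ - θ̃‖₂ for all θ ∈ B_r(θ̃). -/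

import Mathlib

open Matrix

lemma euclid_sum_single {d : ℕ} (u : EuclideanSpace ℝ (Fin d)) :
    u = ∑ i, u i • EuclideanSpace.single i (1:ℝ) := by
  have := (EuclideanSpace.basisFun (Fin d) ℝ).toBasis.sum_repr u
  simp only [OrthonormalBasis.coe_toBasis_repr_apply, EuclideanSpace.basisFun_repr,
    OrthonormalBasis.coe_toBasis, EuclideanSpace.basisFun_apply] at this
  exact this.symm

lemma bilin_expand {d : ℕ}
    (B : EuclideanSpace ℝ (Fin d) →L[ℝ] EuclideanSpace ℝ (Fin d) →L[ℝ] ℝ)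
    (u w : EuclideanSpace ℝ (Fin d)) :
    B u w = ∑ i, ∑ j, u i * w j *
      B (EuclideanSpace.single i 1) (EuclideanSpace.single j 1) := by
  conv_lhs => rw [euclid_sum_single u, euclid_sum_single w]
  simp only [map_sum, _root_.map_smul, ContinuousLinearMap.sum_apply,
    ContinuousLinearMap.smul_apply, smul_eq_mul]
  simp only [Finset.mul_sum]
  rw [Finset.sum_comm]
  exact Finset.sum_congr rfl fun i _ => Finset.sum_congr rfl fun j _ => by ring

set_option maxHeartbeats 1000000 in
/-- Growth of the gradient near an isolated stationary point (Lemma 2, statement 1):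
if on `B_r(θ̃)` the Hessian `H_θ` of a `C²` function `R` satisfies
`H_θᵀ H_θ̃⁻¹ ≽ c I` and `H_θᵀ H_θ ≽ c I`, and `∇R(θ̃) = 0`, then
`‖∇R(θ)‖ ≥ c₀ ‖θ - θ̃‖` on `B_r(θ̃)` for some `c₀ > 0`. -/
theorem gradient_growth_near_stationary {d : ℕ}
    (R : EuclideanSpace ℝ (Fin d) → ℝ) (hR : ContDiff ℝ 2 R)
    (H : EuclideanSpace ℝ (Fin d) → Matrix (Fin d) (Fin d) ℝ)
    (hH : ∀ θ i j, H θ i j =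
      iteratedFDeriv ℝ 2 R θ ![EuclideanSpace.single i 1, EuclideanSpace.single j 1])
    (Θ : Set (EuclideanSpace ℝ (Fin d))) (θt : EuclideanSpace ℝ (Fin d))
    (hθt : θt ∈ interior Θ) (hgrad : gradient R θt = 0)
    (r c : ℝ) (hr : 0 < r) (hc : 0 < c)
    (hball : Metric.closedBall θt r ⊆ Θ)
    (hinv : IsUnit (H θt))
    (h1 : ∀ θ ∈ Metric.closedBall θt r, ∀ v : Fin d → ℝ,
      c * (∑ i, (v i) ^ 2) ≤ v ⬝ᵥ ((H θ)ᵀ * (H θt)⁻¹) *ᵥ v)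
    (h2 : ∀ θ ∈ Metric.closedBall θt r, ∀ v : Fin d → ℝ,
      c * (∑ i, (v i) ^ 2) ≤ v ⬝ᵥ ((H θ)ᵀ * (H θ)) *ᵥ v) :
    ∃ c₀ > 0, ∀ θ ∈ Metric.closedBall θt r, c₀ * ‖θ - θt‖ ≤ ‖gradient R θ‖ := by
  classical
  set A : Matrix (Fin d) (Fin d) ℝ := (H θt)⁻¹ with hA
  set L : EuclideanSpace ℝ (Fin d) →L[ℝ] EuclideanSpace ℝ (Fin d) :=
    LinearMap.toContinuousLinearMap (Matrix.toEuclideanLin A) with hLdef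
  refine ⟨c / (‖L‖ + 1), div_pos hc (by positivity), ?_⟩
  intro θ hθ
  set u : EuclideanSpace ℝ (Fin d) := θ - θt with hudef
  by_cases hu0 : u = 0
  · rw [hu0, norm_zero, mul_zero]
    positivity
  -- setup
  set w : EuclideanSpace ℝ (Fin d) := L u with hwdef
  have hpair : ∀ (x v : EuclideanSpace ℝ (Fin d)),
      (fderiv ℝ R x) v = inner ℝ (gradient R x) v := by
    intro x v
    rw [gradient]
    exact (InnerProductSpace.toDual_symm_apply (𝕜 := ℝ)).symm
  have contF : ContDiff ℝ 1 (fderiv ℝ R) := hR.fderiv_right (by norm_num)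
  set B : EuclideanSpace ℝ (Fin d) →
      EuclideanSpace ℝ (Fin d) →L[ℝ] EuclideanSpace ℝ (Fin d) →L[ℝ] ℝ :=
    fun x => fderiv ℝ (fderiv ℝ R) x with hBdef
  set γ : ℝ → EuclideanSpace ℝ (Fin d) := fun t => θt + t • u with hγdef
  have hur : ‖u‖ ≤ r := by
    rw [hudef, ← dist_eq_norm]
    exact Metric.mem_closedBall.mp hθ
  have hmem : ∀ t ∈ Set.Icc (0:ℝ) 1, γ t ∈ Metric.closedBall θt r := by
    intro t ht
    rw [Metric.mem_closedBall, dist_eq_norm, hγdef]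
    simp only [add_sub_cancel_left]
    rw [norm_smul]
    calc ‖t‖ * ‖u‖ ≤ 1 * ‖u‖ := by
          apply mul_le_mul_of_nonneg_right _ (norm_nonneg u)
          rw [Real.norm_eq_abs, abs_le]; exact ⟨by linarith [ht.1], ht.2⟩
      _ = ‖u‖ := one_mul _
      _ ≤ r := hur
  set f : ℝ → ℝ := fun t => (fderiv ℝ R (γ t)) w with hfdef
  have hγcont : Continuous γ := by
    apply continuous_const.add
    exact (continuous_id.smul continuous_const)
  have hfc : ContinuousOn f (Set.Icc 0 1) := by
    have : Continuous f :=
      (ContinuousLinearMap.apply ℝ ℝ w).continuous.comp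
        ((contF.continuous).comp hγcont)
    exact this.continuousOn
  have hder : ∀ t ∈ Set.Ioo (0:ℝ) 1, HasDerivAt f (B (γ t) u w) t := by
    intro t _
    have hγd : HasDerivAt γ u t := by
      simpa [hγdef] using ((hasDerivAt_id t).smul_const u).const_add θt
    have hFd : HasFDerivAt (fderiv ℝ R) (B (γ t)) (γ t) :=
      ((contF.differentiable (by norm_num)) (γ t)).hasFDerivAt
    exact (ContinuousLinearMap.apply ℝ ℝ w).hasFDerivAt.comp_hasDerivAt t
      (hFd.comp_hasDerivAt t hγd)
  obtain ⟨t₀, ht₀, hslope⟩ :=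
    exists_hasDerivAt_eq_slope f (fun t => B (γ t) u w) one_pos hfc hder
  have hγ0 : γ 0 = θt := by simp [hγdef]
  have hγ1 : γ 1 = θ := by simp [hγdef, hudef]
  have hf0 : f 0 = 0 := by
    rw [hfdef]; simp only [hγ0]
    rw [hpair, hgrad, inner_zero_left]
  have hf1 : f 1 = inner ℝ (gradient R θ) w := by
    rw [hfdef]; simp only [hγ1]; exact hpair θ w
  have hBval : (inner ℝ (gradient R θ) w : ℝ) = B (γ t₀) u w := by
    rw [← hf1]
    have : f 1 = f 1 - f 0 := by rw [hf0, sub_zero]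
    rw [this]
    rw [hslope]; norm_num
  -- identify B with H
  have hBH : ∀ (x : EuclideanSpace ℝ (Fin d)) i j,
      B x (EuclideanSpace.single i 1) (EuclideanSpace.single j 1) = H x i j := by
    intro x i j
    rw [hH x i j, iteratedFDeriv_two_apply]
    simp [hBdef]
  have hsym : ∀ (x : EuclideanSpace ℝ (Fin d)) i j, H x i j = H x j i := by
    intro x i j
    have hs := (hR.contDiffAt (x := x)).isSymmSndFDerivAt (by norm_num)
    rw [← hBH, ← hBH]
    exact hs _ _
  have hwj : ∀ j, w j = (A *ᵥ (fun i => u i)) j := fun j => rfl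
  have hexp : B (γ t₀) u w = ∑ i, ∑ j, u i * w j * H (γ t₀) i j := by
    rw [bilin_expand]
    exact Finset.sum_congr rfl fun i _ => Finset.sum_congr rfl fun j _ => by rw [hBH]
  have hmem₀ : γ t₀ ∈ Metric.closedBall θt r :=
    hmem t₀ ⟨le_of_lt ht₀.1, le_of_lt ht₀.2⟩
  have hgen : ∀ (M : Matrix (Fin d) (Fin d) ℝ) (z uf : Fin d → ℝ),
      uf ⬝ᵥ (Mᵀ *ᵥ z) = ∑ i, ∑ j, uf i * z j * M j i := by
    intro M z uf
    simp only [dotProduct, Matrix.mulVec, Matrix.transpose_apply, Finset.mul_sum]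
    exact Finset.sum_congr rfl fun i _ => Finset.sum_congr rfl fun j _ => by ring
  have hkey : c * ∑ i, (u i) ^ 2 ≤ B (γ t₀) u w := by
    refine le_trans (h1 (γ t₀) hmem₀ (fun i => u i)) (le_of_eq ?_)
    rw [← Matrix.mulVec_mulVec, hgen, hexp]
    refine Finset.sum_congr rfl fun i _ => Finset.sum_congr rfl fun j _ => ?_
    rw [hwj j, hsym (γ t₀) j i]
  have hnu : (∑ i, (u i) ^ 2) = ‖u‖ ^ 2 := by
    rw [← real_inner_self_eq_norm_sq]
    simp only [PiLp.inner_apply, RCLike.inner_apply, conj_trivial, sq]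
  have hCS : (inner ℝ (gradient R θ) w : ℝ) ≤ ‖gradient R θ‖ * ‖w‖ :=
    real_inner_le_norm _ _
  have hWn : ‖w‖ ≤ ‖L‖ * ‖u‖ := L.le_opNorm u
  have hupos : 0 < ‖u‖ := norm_pos_iff.mpr hu0
  have hg0 : 0 ≤ ‖gradient R θ‖ := norm_nonneg _
  have hL0 : 0 ≤ ‖L‖ := norm_nonneg _
  have hchain : c * ‖u‖ ^ 2 ≤ ‖gradient R θ‖ * (‖L‖ * ‖u‖) := by
    calc c * ‖u‖ ^ 2 = c * ∑ i, (u i) ^ 2 := by rw [hnu]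
      _ ≤ B (γ t₀) u w := hkey
      _ = inner ℝ (gradient R θ) w := hBval.symm
      _ ≤ ‖gradient R θ‖ * ‖w‖ := hCS
      _ ≤ ‖gradient R θ‖ * (‖L‖ * ‖u‖) := by
          exact mul_le_mul_of_nonneg_left hWn hg0
  rw [div_mul_eq_mul_div, div_le_iff₀ (by positivity)]
  nlinarith [mul_nonneg hg0 (le_of_lt hupos)]
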